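/- The subspace A_z^0 = Q ⊕ Q·e_z ⊕ (⊕_{a ∈ {0,z}, b ∈ {1,z}} e_a A_z e_b), the span of the empty word, the single letter e_z, and all words beginning with e_0 or e_z and ending with e_1 or e_z, is closed under the shuffle product. -/
import Mathlib


open Finsupp

variable {α : Type} [DecidableEq α]

noncomputable def wordShuffle : List α → List α → (List α →₀ ℚ)
  | [], v => Finsupp.single v 1
  | u, [] => Finsupp.single u 1
  | a :: u, b :: v =>
      (wordShuffle u (b :: v)).mapDomain (a :: ·) +
      (wordShuffle (a :: u) v).mapDomain (b :: ·)
termination_by u v => u.length + v.length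

noncomputable def shuffle (x y : List α →₀ ℚ) : List α →₀ ℚ :=
  x.sum fun u cu => y.sum fun v cv => (cu * cv) • wordShuffle u v

/-- Membership in `A_z^0 = ℚ ⊕ ℚ e_z ⊕ (⊕_{a∈{0,z}, b∈{1,z}} e_a A_z e_b)`:
every word in the support is empty, or is the single letter `e_z`, or starts
with `e₀` or `e_z` and ends with `e₁` or `e_z`.
Letters: `0 ↔ e₀`, `1 ↔ e₁`, `2 ↔ e_z`. -/
def InAz0 (x : List (Fin 3) →₀ ℚ) : Prop :=
  ∀ w ∈ x.support, w = [] ∨ w = [(2 : Fin 3)] ∨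
    ((w.head? = some (0 : Fin 3) ∨ w.head? = some (2 : Fin 3)) ∧
     (w.getLast? = some (1 : Fin 3) ∨ w.getLast? = some (2 : Fin 3)))


omit [DecidableEq α] in
lemma getLast?_cons_of_ne_nil (a : α) {w : List α} (h : w ≠ []) :
    (a :: w).getLast? = w.getLast? := by
  obtain ⟨d, w', rfl⟩ := List.exists_cons_of_ne_nil h
  exact List.getLast?_cons_cons

lemma wordShuffle_support_head_last :
    ∀ (u v w : List α), w ∈ (wordShuffle u v).support →
      (w.head? = u.head? ∨ w.head? = v.head?) ∧
      (w.getLast? = u.getLast? ∨ w.getLast? = v.getLast?) := by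
  intro u v
  induction u, v using wordShuffle.induct with
  | case1 v =>
    intro w hw
    rw [show wordShuffle ([] : List α) v = Finsupp.single v 1 from by rw [wordShuffle]] at hw
    have h := Finsupp.support_single_subset hw
    rw [Finset.mem_singleton] at h
    subst h
    exact ⟨Or.inr rfl, Or.inr rfl⟩
  | case2 u h0 =>
    intro w hw
    rw [show wordShuffle u ([] : List α) = Finsupp.single u 1 from by
      cases u with
      | nil => rw [wordShuffle]
      | cons a u => rw [wordShuffle]; simp] at hw
    have h := Finsupp.support_single_subset hw
    rw [Finset.mem_singleton] at h
    subst h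
    exact ⟨Or.inl rfl, Or.inl rfl⟩
  | case3 a u b v ih1 ih2 =>
    intro w hw
    rw [show wordShuffle (a :: u) (b :: v) =
        (wordShuffle u (b :: v)).mapDomain (a :: ·) +
        (wordShuffle (a :: u) v).mapDomain (b :: ·) from by rw [wordShuffle]] at hw
    have h := Finsupp.support_add hw
    rw [Finset.mem_union] at h
    rcases h with h | h
    · obtain ⟨w', hw', rfl⟩ := Finset.mem_image.mp (Finsupp.mapDomain_support h)
      obtain ⟨h1, h2⟩ := ih1 w' hw'
      refine ⟨Or.inl rfl, ?_⟩
      rcases h2 with h2 | h2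
      · cases u with
        | nil =>
          have : w' = [] := List.getLast?_eq_none_iff.mp h2
          subst this
          exact Or.inl rfl
        | cons c u' =>
          left
          have hne : w' ≠ [] := fun h => by
            subst h
            exact (List.cons_ne_nil c u') (List.getLast?_eq_none_iff.mp h2.symm)
          rw [getLast?_cons_of_ne_nil a hne, h2, List.getLast?_cons_cons]
      · right
        have hne : w' ≠ [] := fun h => by
          subst h
          exact (List.cons_ne_nil b v) (List.getLast?_eq_none_iff.mp h2.symm)
        rw [getLast?_cons_of_ne_nil a hne, h2]
    · obtain ⟨w', hw', rfl⟩ := Finset.mem_image.mp (Finsupp.mapDomain_support h)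
      obtain ⟨h1, h2⟩ := ih2 w' hw'
      refine ⟨Or.inr rfl, ?_⟩
      rcases h2 with h2 | h2
      · left
        have hne : w' ≠ [] := fun h => by
          subst h
          exact (List.cons_ne_nil a u) (List.getLast?_eq_none_iff.mp h2.symm)
        rw [getLast?_cons_of_ne_nil b hne, h2]
      · cases v with
        | nil =>
          have : w' = [] := List.getLast?_eq_none_iff.mp h2
          subst this
          exact Or.inr rfl
        | cons c v' =>
          right
          have hne : w' ≠ [] := fun h => by
            subst h
            exact (List.cons_ne_nil c v') (List.getLast?_eq_none_iff.mp h2.symm)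
          rw [getLast?_cons_of_ne_nil b hne, h2, List.getLast?_cons_cons]

lemma good_iff (w : List (Fin 3)) :
    (w = [] ∨ w = [(2 : Fin 3)] ∨
      ((w.head? = some (0 : Fin 3) ∨ w.head? = some (2 : Fin 3)) ∧
       (w.getLast? = some (1 : Fin 3) ∨ w.getLast? = some (2 : Fin 3)))) ↔
    (w = [] ∨
      ((w.head? = some (0 : Fin 3) ∨ w.head? = some (2 : Fin 3)) ∧
       (w.getLast? = some (1 : Fin 3) ∨ w.getLast? = some (2 : Fin 3)))) := by
  constructor
  · rintro (h | h | h)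
    · exact Or.inl h
    · subst h; exact Or.inr ⟨Or.inr rfl, Or.inr rfl⟩
    · exact Or.inr h
  · rintro (h | h)
    · exact Or.inl h
    · exact Or.inr (Or.inr h)

/-- `A_z^0` is closed under the shuffle product. -/
theorem Az0_shuffle_closed (x y : List (Fin 3) →₀ ℚ)
    (hx : InAz0 x) (hy : InAz0 y) : InAz0 (shuffle x y) := by
  intro w hw
  rw [good_iff]
  obtain ⟨u, hu, hw⟩ := Finset.mem_biUnion.mp (Finsupp.support_sum hw)
  obtain ⟨v, hv, hw⟩ := Finset.mem_biUnion.mp (Finsupp.support_sum hw)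
  have hw' := Finsupp.support_smul hw
  obtain ⟨hhead, hlast⟩ := wordShuffle_support_head_last u v w hw'
  have hu' := (good_iff u).mp (hx u hu)
  have hv' := (good_iff v).mp (hy v hv)
  by_cases hwnil : w = []
  · exact Or.inl hwnil
  right
  constructor
  · rcases hhead with hh | hh
    · rcases hu' with rfl | hu'
      · exact absurd (List.head?_eq_none_iff.mp hh) hwnil
      · exact hh ▸ hu'.1
    · rcases hv' with rfl | hv'
      · exact absurd (List.head?_eq_none_iff.mp hh) hwnil
      · exact hh ▸ hv'.1
  · rcases hlast with hl | hl
    · rcases hu' with rfl | hu'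
      · exact absurd (List.getLast?_eq_none_iff.mp hl) hwnil
      · exact hl ▸ hu'.2
    · rcases hv' with rfl | hv'
      · exact absurd (List.getLast?_eq_none_iff.mp hl) hwnil
      · exact hl ▸ hv'.2
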